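/- arXiv:2506.12451 — 5 statements merged into one kernel-verified Lean document; each statement's English description precedes it below -/
import Mathlib

section
/- For all a, b ∈ ℤ, the polynomial (6aX² + 9bX − 4a²)² − (4a³ − 27b²)(−3X² + 4a) in ℤ[X] is divisible by X³ − aX + b. Consequently, if α is a root of X³ − aX + b in a commutative ring, then (6aα² + 9bα − 4a²)² = (4a³ − 27b²)(−3α² + 4a); in particular, for a cubic field L = ℚ(α) with α a root of the irreducible polynomial X³ − aX + b, the element (6aα² + 9bα − 4a²)/z, where z² = 4a³ − 27b², is a square root of −3α² + 4a. -/
open Polynomial in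
/-- docstring -/
theorem cubic_sqrt_discriminant_identity (a b : ℤ) :
    ((X ^ 3 - C a * X + C b : ℤ[X]) ∣
      (C (6 * a) * X ^ 2 + C (9 * b) * X - C (4 * a ^ 2)) ^ 2 -
        C (4 * a ^ 3 - 27 * b ^ 2) * (C (-3) * X ^ 2 + C (4 * a))) ∧
    (∀ (R : Type) [CommRing R] (α : R), α ^ 3 - (a : R) * α + (b : R) = 0 →
      (6 * (a : R) * α ^ 2 + 9 * (b : R) * α - 4 * (a : R) ^ 2) ^ 2 =
        ((4 * a ^ 3 - 27 * b ^ 2 : ℤ) : R) * (-3 * α ^ 2 + 4 * (a : R))) ∧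
    (∀ (K : Type) [Field K] (α z : K), α ^ 3 - (a : K) * α + (b : K) = 0 →
      z ^ 2 = ((4 * a ^ 3 - 27 * b ^ 2 : ℤ) : K) → z ≠ 0 →
      ((6 * (a : K) * α ^ 2 + 9 * (b : K) * α - 4 * (a : K) ^ 2) / z) ^ 2 =
        -3 * α ^ 2 + 4 * (a : K)) := by
  have key : ∀ (R : Type) [CommRing R] (α : R), α ^ 3 - (a : R) * α + (b : R) = 0 →
      (6 * (a : R) * α ^ 2 + 9 * (b : R) * α - 4 * (a : R) ^ 2) ^ 2 =
        ((4 * a ^ 3 - 27 * b ^ 2 : ℤ) : R) * (-3 * α ^ 2 + 4 * (a : R)) := by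
    intro R _ α h
    push_cast
    linear_combination (36 * (a : R) ^ 2 * α + 108 * (a : R) * (b : R)) * h
  refine ⟨⟨C (36 * a ^ 2) * X + C (108 * a * b), by ring_nf; simp [C_mul, C_pow]; ring⟩,
    key, ?_⟩
  intro K _ α z h hz hz0
  rw [div_pow, hz, key K α h, mul_div_cancel_left₀]
  · intro hd
    rw [hd] at hz
    exact hz0 (pow_eq_zero_iff (two_ne_zero) |>.mp hz)
end

section
/- Let a, b ∈ ℤ with a ≠ 0, and set g₁ = gcd(2a², 6a) and g₂ = gcd(2a, 6). Then there exists a unimodular matrix U ∈ M₉(ℤ) (det U = ±1) such that U · M(a,b) is the 9×3 matrix whose first four rows are (1,0,2), (0,g₁,0), (0,9b,−3), (0,0,g₂) and whose remaining five rows are zero. -/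
set_option maxHeartbeats 2000000
set_option maxRecDepth 8000


/-- The `9×3` integer matrix `M(a,b)` built from the action of the Hopf algebra basis
`{w₁, w₂, w₃}` on the basis `{1, α, α²}` of `ℤ[α]`. -/
def cubicActionMatrix (a b : ℤ) : Matrix (Fin 9) (Fin 3) ℤ :=
  !![1, 0, 2;
     0, 0, 0;
     0, 0, 0;
     0, -4 * a ^ 2, 0;
     1, 9 * b, -1;
     0, 6 * a, 0;
     0, 6 * a * b, 2 * a;
     0, -2 * a ^ 2, 0;
     1, -9 * b, -1]

theorem vc_2_1 {α : Type*} (x : α) (u : Fin 1 → α) :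
    Matrix.vecCons x u (1 : Fin 2) = u 0 := rfl
theorem vc_3_1 {α : Type*} (x : α) (u : Fin 2 → α) :
    Matrix.vecCons x u (1 : Fin 3) = u 0 := rfl
theorem vc_3_2 {α : Type*} (x : α) (u : Fin 2 → α) :
    Matrix.vecCons x u (2 : Fin 3) = u 1 := rfl
theorem vc_4_1 {α : Type*} (x : α) (u : Fin 3 → α) :
    Matrix.vecCons x u (1 : Fin 4) = u 0 := rfl
theorem vc_4_2 {α : Type*} (x : α) (u : Fin 3 → α) :
    Matrix.vecCons x u (2 : Fin 4) = u 1 := rfl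
theorem vc_4_3 {α : Type*} (x : α) (u : Fin 3 → α) :
    Matrix.vecCons x u (3 : Fin 4) = u 2 := rfl
theorem vc_5_1 {α : Type*} (x : α) (u : Fin 4 → α) :
    Matrix.vecCons x u (1 : Fin 5) = u 0 := rfl
theorem vc_5_2 {α : Type*} (x : α) (u : Fin 4 → α) :
    Matrix.vecCons x u (2 : Fin 5) = u 1 := rfl
theorem vc_5_3 {α : Type*} (x : α) (u : Fin 4 → α) :
    Matrix.vecCons x u (3 : Fin 5) = u 2 := rfl
theorem vc_5_4 {α : Type*} (x : α) (u : Fin 4 → α) :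
    Matrix.vecCons x u (4 : Fin 5) = u 3 := rfl
theorem vc_6_1 {α : Type*} (x : α) (u : Fin 5 → α) :
    Matrix.vecCons x u (1 : Fin 6) = u 0 := rfl
theorem vc_6_2 {α : Type*} (x : α) (u : Fin 5 → α) :
    Matrix.vecCons x u (2 : Fin 6) = u 1 := rfl
theorem vc_6_3 {α : Type*} (x : α) (u : Fin 5 → α) :
    Matrix.vecCons x u (3 : Fin 6) = u 2 := rfl
theorem vc_6_4 {α : Type*} (x : α) (u : Fin 5 → α) :
    Matrix.vecCons x u (4 : Fin 6) = u 3 := rfl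
theorem vc_6_5 {α : Type*} (x : α) (u : Fin 5 → α) :
    Matrix.vecCons x u (5 : Fin 6) = u 4 := rfl
theorem vc_7_1 {α : Type*} (x : α) (u : Fin 6 → α) :
    Matrix.vecCons x u (1 : Fin 7) = u 0 := rfl
theorem vc_7_2 {α : Type*} (x : α) (u : Fin 6 → α) :
    Matrix.vecCons x u (2 : Fin 7) = u 1 := rfl
theorem vc_7_3 {α : Type*} (x : α) (u : Fin 6 → α) :
    Matrix.vecCons x u (3 : Fin 7) = u 2 := rfl
theorem vc_7_4 {α : Type*} (x : α) (u : Fin 6 → α) :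
    Matrix.vecCons x u (4 : Fin 7) = u 3 := rfl
theorem vc_7_5 {α : Type*} (x : α) (u : Fin 6 → α) :
    Matrix.vecCons x u (5 : Fin 7) = u 4 := rfl
theorem vc_7_6 {α : Type*} (x : α) (u : Fin 6 → α) :
    Matrix.vecCons x u (6 : Fin 7) = u 5 := rfl
theorem vc_8_1 {α : Type*} (x : α) (u : Fin 7 → α) :
    Matrix.vecCons x u (1 : Fin 8) = u 0 := rfl
theorem vc_8_2 {α : Type*} (x : α) (u : Fin 7 → α) :
    Matrix.vecCons x u (2 : Fin 8) = u 1 := rfl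
theorem vc_8_3 {α : Type*} (x : α) (u : Fin 7 → α) :
    Matrix.vecCons x u (3 : Fin 8) = u 2 := rfl
theorem vc_8_4 {α : Type*} (x : α) (u : Fin 7 → α) :
    Matrix.vecCons x u (4 : Fin 8) = u 3 := rfl
theorem vc_8_5 {α : Type*} (x : α) (u : Fin 7 → α) :
    Matrix.vecCons x u (5 : Fin 8) = u 4 := rfl
theorem vc_8_6 {α : Type*} (x : α) (u : Fin 7 → α) :
    Matrix.vecCons x u (6 : Fin 8) = u 5 := rfl
theorem vc_8_7 {α : Type*} (x : α) (u : Fin 7 → α) :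
    Matrix.vecCons x u (7 : Fin 8) = u 6 := rfl
theorem vc_9_1 {α : Type*} (x : α) (u : Fin 8 → α) :
    Matrix.vecCons x u (1 : Fin 9) = u 0 := rfl
theorem vc_9_2 {α : Type*} (x : α) (u : Fin 8 → α) :
    Matrix.vecCons x u (2 : Fin 9) = u 1 := rfl
theorem vc_9_3 {α : Type*} (x : α) (u : Fin 8 → α) :
    Matrix.vecCons x u (3 : Fin 9) = u 2 := rfl
theorem vc_9_4 {α : Type*} (x : α) (u : Fin 8 → α) :
    Matrix.vecCons x u (4 : Fin 9) = u 3 := rfl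
theorem vc_9_5 {α : Type*} (x : α) (u : Fin 8 → α) :
    Matrix.vecCons x u (5 : Fin 9) = u 4 := rfl
theorem vc_9_6 {α : Type*} (x : α) (u : Fin 8 → α) :
    Matrix.vecCons x u (6 : Fin 9) = u 5 := rfl
theorem vc_9_7 {α : Type*} (x : α) (u : Fin 8 → α) :
    Matrix.vecCons x u (7 : Fin 9) = u 6 := rfl
theorem vc_9_8 {α : Type*} (x : α) (u : Fin 8 → α) :
    Matrix.vecCons x u (8 : Fin 9) = u 7 := rfl

theorem det_pm_one_of_mul_eq_one {n : ℕ} (U V : Matrix (Fin n) (Fin n) ℤ)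
    (h : U * V = 1) : U.det = 1 ∨ U.det = -1 := by
  have h2 : U.det * V.det = 1 := by rw [← Matrix.det_mul, h, Matrix.det_one]
  exact Int.isUnit_iff.mp (IsUnit.of_mul_eq_one _ h2)

/-- There is a unimodular `U ∈ M₉(ℤ)` (det `U = ±1`) transforming `M(a,b)` into the `9×3` matrix with
first four rows `(1,0,2), (0,g₁,0), (0,9b,−3), (0,0,g₂)` and remaining rows zero, where
`g₁ = gcd(2a², 6a)` and `g₂ = gcd(2a, 6)`. -/
theorem cubicActionMatrix_first_reduction (a b : ℤ) (ha : a ≠ 0) :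
    ∃ U : Matrix (Fin 9) (Fin 9) ℤ,
      (U.det = 1 ∨ U.det = -1) ∧
      U * cubicActionMatrix a b =
        !![1, 0, 2;
           0, (Int.gcd (2 * a ^ 2) (6 * a) : ℤ), 0;
           0, 9 * b, -3;
           0, 0, (Int.gcd (2 * a) 6 : ℤ);
           0, 0, 0;
           0, 0, 0;
           0, 0, 0;
           0, 0, 0;
           0, 0, 0] := by
  set g1 : ℤ := (Int.gcd (2 * a ^ 2) (6 * a) : ℤ) with hg1
  set g2 : ℤ := (Int.gcd (2 * a) 6 : ℤ) with hg2
  have hg1ne : g1 ≠ 0 := by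
    simp only [hg1, ne_eq, Int.natCast_eq_zero, Int.gcd_eq_zero_iff, not_and_or]
    left
    positivity
  have hg2ne : g2 ≠ 0 := by
    simp only [hg2, ne_eq, Int.natCast_eq_zero, Int.gcd_eq_zero_iff]
    omega
  obtain ⟨p, hp⟩ : g1 ∣ 2 * a ^ 2 := Int.gcd_dvd_left _ _
  obtain ⟨q, hq⟩ : g1 ∣ 6 * a := Int.gcd_dvd_right _ _
  obtain ⟨s, hs⟩ : g2 ∣ 2 * a := Int.gcd_dvd_left _ _
  obtain ⟨t, ht⟩ : g2 ∣ (6 : ℤ) := Int.gcd_dvd_right _ _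
  set x : ℤ := Int.gcdA (2 * a ^ 2) (6 * a) with hx
  set y : ℤ := Int.gcdB (2 * a ^ 2) (6 * a) with hy
  set u : ℤ := Int.gcdA (2 * a) 6 with hu
  set v : ℤ := Int.gcdB (2 * a) 6 with hv
  have hbez1 : g1 = 2 * a ^ 2 * x + 6 * a * y := Int.gcd_eq_gcd_ab _ _
  have hbez2 : g2 = 2 * a * u + 6 * v := Int.gcd_eq_gcd_ab _ _
  have h1 : x * p + y * q = 1 := by
    have h : g1 * (x * p + y * q) = g1 * 1 := by
      linear_combination (-1:ℤ) * hbez1 - x * hp - y * hq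
    exact mul_left_cancel₀ hg1ne h
  have h4 : u * s + v * t = 1 := by
    have h : g2 * (u * s + v * t) = g2 * 1 := by
      linear_combination (-1:ℤ) * hbez2 - u * hs - v * ht
    exact mul_left_cancel₀ hg2ne h
  refine ⟨!![1, 0, 0, 0, 0, 0, 0, 0, 0;
             0, 0, 0, 0, 0, y, 0, -x, 0;
             -1, 0, 0, 0, 1, 0, 0, 0, 0;
             2*v, 0, 0, 0, -v, -(b*u), u, 0, -v;
             0, 1, 0, 0, 0, 0, 0, 0, 0;
             0, 0, 1, 0, 0, 0, 0, 0, 0;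
             0, 0, 0, 1, 0, 0, 0, -2, 0;
             0, 0, 0, 0, 0, p, 0, q, 0;
             -(2*s), 0, 0, 0, s, -(b*t), t, 0, s], ?_, ?_⟩
  · have hUV : (!![1, 0, 0, 0, 0, 0, 0, 0, 0;
             0, 0, 0, 0, 0, y, 0, -x, 0;
             -1, 0, 0, 0, 1, 0, 0, 0, 0;
             2*v, 0, 0, 0, -v, -(b*u), u, 0, -v;
             0, 1, 0, 0, 0, 0, 0, 0, 0;
             0, 0, 1, 0, 0, 0, 0, 0, 0;
             0, 0, 0, 1, 0, 0, 0, -2, 0;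
             0, 0, 0, 0, 0, p, 0, q, 0;
             -(2*s), 0, 0, 0, s, -(b*t), t, 0, s] : Matrix (Fin 9) (Fin 9) ℤ) *
          !![1, 0, 0, 0, 0, 0, 0, 0, 0;
             0, 0, 0, 0, 1, 0, 0, 0, 0;
             0, 0, 0, 0, 0, 1, 0, 0, 0;
             0, -(2*p), 0, 0, 0, 0, 1, 2*y, 0;
             1, 0, 1, 0, 0, 0, 0, 0, 0;
             0, q, 0, 0, 0, 0, 0, x, 0;
             0, b*q, 0, s, 0, 0, 0, b*x, v;
             0, -p, 0, 0, 0, 0, 0, y, 0;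
             1, 0, -1, -t, 0, 0, 0, 0, u] = 1 := by
      ext i j
      fin_cases i <;> fin_cases j <;>
        simp [Matrix.mul_apply, Fin.sum_univ_succ, Matrix.one_apply, Matrix.vecHead, Matrix.vecTail,
              vc_2_1, vc_3_1, vc_3_2, vc_4_1, vc_4_2, vc_4_3, vc_5_1, vc_5_2, vc_5_3, vc_5_4, vc_6_1, vc_6_2, vc_6_3, vc_6_4, vc_6_5, vc_7_1, vc_7_2, vc_7_3, vc_7_4, vc_7_5, vc_7_6, vc_8_1, vc_8_2, vc_8_3, vc_8_4, vc_8_5, vc_8_6, vc_8_7, vc_9_1, vc_9_2, vc_9_3, vc_9_4, vc_9_5, vc_9_6, vc_9_7, vc_9_8] <;>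
        first
          | ring1
          | linear_combination h1
          | linear_combination h4
          | linear_combination (-1 : ℤ) * h1
          | linear_combination (-1 : ℤ) * h4
    exact det_pm_one_of_mul_eq_one _ _ hUV
  · ext i j
    fin_cases i <;> fin_cases j <;>
      simp [Matrix.mul_apply, Fin.sum_univ_succ, cubicActionMatrix, Matrix.vecHead, Matrix.vecTail,
        vc_2_1, vc_3_1, vc_3_2, vc_4_1, vc_4_2, vc_4_3, vc_5_1, vc_5_2, vc_5_3, vc_5_4, vc_6_1, vc_6_2, vc_6_3, vc_6_4, vc_6_5, vc_7_1, vc_7_2, vc_7_3, vc_7_4, vc_7_5, vc_7_6, vc_8_1, vc_8_2, vc_8_3, vc_8_4, vc_8_5, vc_8_6, vc_8_7, vc_9_1, vc_9_2, vc_9_3, vc_9_4, vc_9_5, vc_9_6, vc_9_7, vc_9_8] <;>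
      first
        | ring1
        | linear_combination y * hq + x * hp + g1 * h1
        | linear_combination u * hs + v * ht + g2 * h4
        | linear_combination p * hq - q * hp
        | linear_combination t * hs - s * ht
        | linear_combination (-1:ℤ) * (y * hq + x * hp + g1 * h1)
        | linear_combination (-1:ℤ) * (u * hs + v * ht + g2 * h4)
        | linear_combination (-1:ℤ) * (p * hq - q * hp)
        | linear_combination (-1:ℤ) * (t * hs - s * ht)
end

section
/- Let a, b ∈ ℤ with a ≠ 0 and 3 ∤ a, and set g = gcd(a,b) and Δ = 4a³ − 27b². Then the following are equivalent: (i) there exist β₁, β₂, β₃ ∈ ℤ and r, s ∈ {−1, 1} such that 3β₁ + 2aβ₃ = r and 3aβ₂² − 9bβ₂β₃ + a²β₃² = s·g (equivalently, 3(a/g)β₂² − 9(b/g)β₂β₃ + (a²/g)β₃² = s, all three coefficients being integers); (ii) there exist x, y ∈ ℤ such that x² + 3Δy² = 12ag or x² + 3Δy² = −12ag, such that 6a divides 9by + x or 6a divides 9by − x, and such that 3 ∤ y. -/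
/-- Let `a, b ∈ ℤ` with `a ≠ 0` and `3 ∤ a`, and set `g = gcd(a,b)`, `Δ = 4a³ − 27b²`.
The following are equivalent: (i) there exist `β₁, β₂, β₃ ∈ ℤ` and signs `r, s ∈ {−1,1}`
with `3β₁ + 2aβ₃ = r` and `3aβ₂² − 9bβ₂β₃ + a²β₃² = s·g`; (ii) there exist `x, y ∈ ℤ`
with `x² + 3Δy² = ±12ag`, such that `6a ∣ 9by + x` or `6a ∣ 9by − x`, and `3 ∤ y`. -/
theorem freeness_equations_case1 (a b : ℤ) (ha : a ≠ 0) (h3 : ¬(3 : ℤ) ∣ a) :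
    (∃ β₁ β₂ β₃ r s : ℤ, (r = 1 ∨ r = -1) ∧ (s = 1 ∨ s = -1) ∧
        3 * β₁ + 2 * a * β₃ = r ∧
        3 * a * β₂ ^ 2 - 9 * b * β₂ * β₃ + a ^ 2 * β₃ ^ 2 = s * (Int.gcd a b : ℤ)) ↔
    (∃ x y : ℤ,
        (x ^ 2 + 3 * (4 * a ^ 3 - 27 * b ^ 2) * y ^ 2 = 12 * a * (Int.gcd a b : ℤ) ∨
          x ^ 2 + 3 * (4 * a ^ 3 - 27 * b ^ 2) * y ^ 2 = -(12 * a * (Int.gcd a b : ℤ))) ∧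
        (6 * a ∣ 9 * b * y + x ∨ 6 * a ∣ 9 * b * y - x) ∧
        ¬(3 : ℤ) ∣ y) := by
  set g : ℤ := (Int.gcd a b : ℤ) with hg
  constructor
  · rintro ⟨β₁, β₂, β₃, r, s, hr, hs, h1, h2⟩
    refine ⟨6 * a * β₂ - 9 * b * β₃, β₃, ?_, ?_, ?_⟩
    · rcases hs with rfl | rfl
      · left; linear_combination 12 * a * h2
      · right; linear_combination 12 * a * h2
    · left; exact ⟨β₂, by ring⟩
    · rintro ⟨k, hk⟩
      have hdr : (3 : ℤ) ∣ r := ⟨β₁ + 2 * a * k, by rw [hk] at h1; linear_combination -h1⟩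
      rcases hr with rfl | rfl <;> omega
  · rintro ⟨x, y, heq, hdvd, h3y⟩
    obtain ⟨x', hx'sq, hdvd'⟩ : ∃ x', x' ^ 2 = x ^ 2 ∧ 6 * a ∣ 9 * b * y + x' := by
      rcases hdvd with h | h
      · exact ⟨x, rfl, h⟩
      · exact ⟨-x, by ring, by rw [show 9 * b * y + -x = 9 * b * y - x by ring]; exact h⟩
    obtain ⟨β₂, hβ₂⟩ := hdvd'
    have hm : ¬ (3 : ℤ) ∣ 2 * a * y := by
      intro h
      rcases Int.prime_three.dvd_mul.mp h with h' | h'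
      · rcases Int.prime_three.dvd_mul.mp h' with h'' | h''
        · norm_num at h''
        · exact h3 h''
      · exact h3y h'
    have ha12 : (12 * a : ℤ) ≠ 0 := by simpa using ha
    have key : ∀ t : ℤ, x ^ 2 + 3 * (4 * a ^ 3 - 27 * b ^ 2) * y ^ 2 = t →
        3 * a * β₂ ^ 2 - 9 * b * β₂ * y + a ^ 2 * y ^ 2 = t / (12 * a) ∨
        12 * a * (3 * a * β₂ ^ 2 - 9 * b * β₂ * y + a ^ 2 * y ^ 2) = t := by
      intro t ht
      right
      linear_combination ht + hx'sq - (6 * a * β₂ - 9 * b * y + x') * hβ₂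
    obtain ⟨β₁, r, hr, h1⟩ : ∃ β₁ r : ℤ, (r = 1 ∨ r = -1) ∧ 3 * β₁ + 2 * a * y = r := by
      have h2a : (2 * a * y) % 3 = 1 ∨ (2 * a * y) % 3 = 2 := by omega
      rcases h2a with h | h
      · exact ⟨(1 - 2 * a * y) / 3, 1, Or.inl rfl, by omega⟩
      · exact ⟨(-1 - 2 * a * y) / 3, -1, Or.inr rfl, by omega⟩
    rcases heq with heq | heq
    · refine ⟨β₁, β₂, y, r, 1, hr, Or.inl rfl, h1, ?_⟩
      apply mul_left_cancel₀ ha12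
      rcases key _ heq with _ | hk
      · linear_combination heq + hx'sq - (6 * a * β₂ - 9 * b * y + x') * hβ₂
      · linear_combination hk - heq + heq
    · refine ⟨β₁, β₂, y, r, -1, hr, Or.inr rfl, h1, ?_⟩
      apply mul_left_cancel₀ ha12
      linear_combination heq + hx'sq - (6 * a * β₂ - 9 * b * y + x') * hβ₂
end

section
/- Let a, b ∈ ℤ be nonzero with 3 ∣ a and v₃(a) ≤ v₃(b), and set g = gcd(a,b) and Δ = 4a³ − 27b². Then the following are equivalent: (i) the integral binary quadratic form (a/g)X² − 3(b/g)XY + (a²/(3g))Y² represents 1 or −1, i.e. there exist β₂, β₃ ∈ ℤ and s ∈ {−1, 1} with 3aβ₂² − 9bβ₂β₃ + a²β₃² = 3g·s; (ii) there exist x, y ∈ ℤ such that x² + 3Δy² = 36ag or x² + 3Δy² = −36ag, and such that 6a divides 9by + x or 6a divides 9by − x. -/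
/-- Let `a, b ∈ ℤ` be nonzero with `3 ∣ a` and `v₃(a) ≤ v₃(b)`, and set `g = gcd(a,b)`,
`Δ = 4a³ − 27b²`.  The following are equivalent: (i) the quadratic form
`(a/g)X² − 3(b/g)XY + (a²/(3g))Y²` represents `1` or `−1`, i.e. there are `β₂, β₃ ∈ ℤ`
and `s ∈ {−1,1}` with `3aβ₂² − 9bβ₂β₃ + a²β₃² = 3g·s`; (ii) there exist `x, y ∈ ℤ` with
`x² + 3Δy² = ±36ag` such that `6a ∣ 9by + x` or `6a ∣ 9by − x`. -/
theorem freeness_equations_case2 (a b : ℤ) (ha : a ≠ 0) (hb : b ≠ 0)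
    (h3 : (3 : ℤ) ∣ a) (hv : padicValInt 3 a ≤ padicValInt 3 b) :
    (∃ β₂ β₃ s : ℤ, (s = 1 ∨ s = -1) ∧
        3 * a * β₂ ^ 2 - 9 * b * β₂ * β₃ + a ^ 2 * β₃ ^ 2 = 3 * (Int.gcd a b : ℤ) * s) ↔
    (∃ x y : ℤ,
        (x ^ 2 + 3 * (4 * a ^ 3 - 27 * b ^ 2) * y ^ 2 = 36 * a * (Int.gcd a b : ℤ) ∨
          x ^ 2 + 3 * (4 * a ^ 3 - 27 * b ^ 2) * y ^ 2 = -(36 * a * (Int.gcd a b : ℤ))) ∧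
        (6 * a ∣ 9 * b * y + x ∨ 6 * a ∣ 9 * b * y - x)) := by
  have h12 : (12 * a : ℤ) ≠ 0 := mul_ne_zero (by norm_num) ha
  constructor
  · rintro ⟨β₂, β₃, s, hs, heq⟩
    refine ⟨6 * a * β₂ - 9 * b * β₃, β₃, ?_, Or.inl ⟨β₂, by ring⟩⟩
    rcases hs with rfl | rfl
    · exact Or.inl (by linear_combination 12 * a * heq)
    · exact Or.inr (by linear_combination 12 * a * heq)
  · rintro ⟨x, y, hxy, ⟨k, hk⟩ | ⟨k, hk⟩⟩
    · have hx : x = 6 * a * k - 9 * b * y := by linarith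
      subst hx
      rcases hxy with h | h
      · exact ⟨k, y, 1, Or.inl rfl, mul_left_cancel₀ h12 (by linear_combination h)⟩
      · exact ⟨k, y, -1, Or.inr rfl, mul_left_cancel₀ h12 (by linear_combination h)⟩
    · have hx : x = 9 * b * y - 6 * a * k := by linarith
      subst hx
      rcases hxy with h | h
      · exact ⟨k, y, 1, Or.inl rfl, mul_left_cancel₀ h12 (by linear_combination h)⟩
      · exact ⟨k, y, -1, Or.inr rfl, mul_left_cancel₀ h12 (by linear_combination h)⟩
end

section
/- Let a, b ∈ ℤ be nonzero with v₃(a) > v₃(b), and set g = gcd(a,b) and Δ = 4a³ − 27b². Then the following are equivalent: (i) the integral binary quadratic form (a/(3g))X² − (b/g)XY + (a²/(9g))Y² represents 1 or −1, i.e. there exist β₂, β₃ ∈ ℤ and s ∈ {−1, 1} with 3aβ₂² − 9bβ₂β₃ + a²β₃² = 9g·s; (ii) there exist x, y ∈ ℤ such that x² + 3Δy² = 108ag or x² + 3Δy² = −108ag, and such that 6a divides 9by + x or 6a divides 9by − x. -/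
/-- Let `a, b ∈ ℤ` be nonzero with `v₃(a) > v₃(b)`, and set `g = gcd(a,b)`,
`Δ = 4a³ − 27b²`.  The following are equivalent: (i) the quadratic form
`(a/(3g))X² − (b/g)XY + (a²/(9g))Y²` represents `1` or `−1`, i.e. there are `β₂, β₃ ∈ ℤ`
and `s ∈ {−1,1}` with `3aβ₂² − 9bβ₂β₃ + a²β₃² = 9g·s`; (ii) there exist `x, y ∈ ℤ` with
`x² + 3Δy² = ±108ag` such that `6a ∣ 9by + x` or `6a ∣ 9by − x`. -/
theorem freeness_equations_case3 (a b : ℤ) (ha : a ≠ 0) (hb : b ≠ 0)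
    (hv : padicValInt 3 b < padicValInt 3 a) :
    (∃ β₂ β₃ s : ℤ, (s = 1 ∨ s = -1) ∧
        3 * a * β₂ ^ 2 - 9 * b * β₂ * β₃ + a ^ 2 * β₃ ^ 2 = 9 * (Int.gcd a b : ℤ) * s) ↔
    (∃ x y : ℤ,
        (x ^ 2 + 3 * (4 * a ^ 3 - 27 * b ^ 2) * y ^ 2 = 108 * a * (Int.gcd a b : ℤ) ∨
          x ^ 2 + 3 * (4 * a ^ 3 - 27 * b ^ 2) * y ^ 2 = -(108 * a * (Int.gcd a b : ℤ))) ∧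
        (6 * a ∣ 9 * b * y + x ∨ 6 * a ∣ 9 * b * y - x)) := by
  have h12 : (12 : ℤ) * a ≠ 0 := mul_ne_zero (by norm_num) ha
  constructor
  · rintro ⟨β₂, β₃, s, hs, he⟩
    refine ⟨6 * a * β₂ - 9 * b * β₃, β₃, ?_, Or.inl ⟨β₂, by ring⟩⟩
    rcases hs with rfl | rfl
    · left; linear_combination 12 * a * he
    · right; linear_combination 12 * a * he
  · rintro ⟨x, y, heq, hdvd⟩
    rcases hdvd with ⟨k, hk⟩ | ⟨k, hk⟩ <;> rcases heq with h | h
    · exact ⟨k, y, 1, Or.inl rfl, mul_left_cancel₀ h12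
        (by linear_combination h - (6 * a * k - 9 * b * y + x) * hk)⟩
    · exact ⟨k, y, -1, Or.inr rfl, mul_left_cancel₀ h12
        (by linear_combination h - (6 * a * k - 9 * b * y + x) * hk)⟩
    · exact ⟨k, y, 1, Or.inl rfl, mul_left_cancel₀ h12
        (by linear_combination h - (6 * a * k - 9 * b * y - x) * hk)⟩
    · exact ⟨k, y, -1, Or.inr rfl, mul_left_cancel₀ h12
        (by linear_combination h - (6 * a * k - 9 * b * y - x) * hk)⟩
end
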